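/- Under Assumptions A and B, let {xᵗ} and {L_gᵗ} be generated by SCP_ls. Then: (i) the sequence {xᵗ} is bounded; (ii) the sequence {bar F(x^{t+1}, xᵗ, L_gᵗ)} is nonincreasing and converges to some real number bar F*, and bar F(x^{t+1}, xᵗ, L_gᵗ) ≤ bar F(xᵗ, x^{t−1}, L_g^{t−1}) − (c/2)‖x^{t+1} − xᵗ‖² for all t ≥ 1; (iii) Σ_{t=0}^∞ ‖x^{t+1} − xᵗ‖² < ∞, and in particular ‖x^{t+1} − xᵗ‖ → 0. -/

import Mathlib

open Set Filter Topology Metric Bornology RealInnerProductSpace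
open scoped Classical

noncomputable section

abbrev Euc (n : ℕ) : Type := EuclideanSpace ℝ (Fin n)

/-- Convex subdifferential of a real-valued function on an inner product space. -/
def ConvexSubdiff {H : Type*} [NormedAddCommGroup H] [InnerProductSpace ℝ H]
    (P : H → ℝ) (x : H) : Set H :=
  {ζ | ∀ y, ⟪ζ, y - x⟫ ≤ P y - P x}

/-- Regular (Fréchet) subdifferential of an extended-real-valued function. -/
def RegularSubdiff {H : Type*} [NormedAddCommGroup H] [InnerProductSpace ℝ H]
    (h : H → EReal) (x : H) : Set H :=
  {ζ | h x ≠ ⊤ ∧ h x ≠ ⊥ ∧ ∀ ε : ℝ, 0 < ε →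
    ∀ᶠ z in 𝓝 x,
      (((h x).toReal + ⟪ζ, z - x⟫ - ε * ‖z - x‖ : ℝ) : EReal) ≤ h z}

/-- Limiting (Mordukhovich) subdifferential. -/
def LimSubdiff {H : Type*} [NormedAddCommGroup H] [InnerProductSpace ℝ H]
    (h : H → EReal) (x : H) : Set H :=
  {ζ | ∃ xs ζs : ℕ → H, (∀ k, ζs k ∈ RegularSubdiff h (xs k)) ∧
    Tendsto xs atTop (𝓝 x) ∧ Tendsto (fun k => h (xs k)) atTop (𝓝 (h x)) ∧
    Tendsto ζs atTop (𝓝 ζ)}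

/-- The Kurdyka–Łojasiewicz property with exponent `α` at a point. -/
def KLExpAt {H : Type*} [NormedAddCommGroup H] [InnerProductSpace ℝ H]
    (h : H → EReal) (α : ℝ) (xhat : H) : Prop :=
  ∃ a₀ : ℝ, 0 < a₀ ∧ ∃ a : ℝ, 0 < a ∧ ∃ V ∈ 𝓝 xhat, ∀ x ∈ V,
    h xhat < h x → h x < h xhat + (a : EReal) →
    1 ≤ a₀ * (1 - α) * ((h x).toReal - (h xhat).toReal) ^ (-α) *
        infDist 0 (LimSubdiff h x)

/-- The general Kurdyka–Łojasiewicz property at a point. -/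
def KLAt {H : Type*} [NormedAddCommGroup H] [InnerProductSpace ℝ H]
    (h : H → EReal) (xhat : H) : Prop :=
  ∃ a : ℝ, 0 < a ∧ ∃ V ∈ 𝓝 xhat, ∃ φ φ' : ℝ → ℝ,
    φ 0 = 0 ∧ ContinuousOn φ (Ico 0 a) ∧ ConcaveOn ℝ (Ico 0 a) φ ∧
    (∀ s ∈ Ioo 0 a, HasDerivAt φ (φ' s) s ∧ 0 < φ' s) ∧
    ∀ x ∈ V, h xhat < h x → h x < h xhat + (a : EReal) →
      1 ≤ φ' ((h x).toReal - (h xhat).toReal) * infDist 0 (LimSubdiff h x)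

/-- The extended objective of problem (P). -/
def Fobj {n m : ℕ} (f P1 P2 : Euc n → ℝ) (g : Fin m → Euc n → ℝ) (x : Euc n) : EReal :=
  if ∀ i, g i x ≤ 0 then ((f x + P1 x - P2 x : ℝ) : EReal) else ⊤

/-- The moving balls constraint functions. -/
def barG {n m : ℕ} (g : Fin m → Euc n → ℝ) (g' : Fin m → Euc n → Euc n)
    (x y : Euc n) (w : EuclideanSpace ℝ (Fin m)) (i : Fin m) : ℝ :=
  g i y + ⟪g' i y, x - y⟫ + w i / 2 * ‖x - y‖ ^ 2

/-- The space `ℝⁿ × ℝⁿ × ℝᵐ` with the (L²) Euclidean inner product. -/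
abbrev PS (n m : ℕ) : Type :=
  WithLp 2 (Euc n × WithLp 2 (Euc n × EuclideanSpace ℝ (Fin m)))

/-- The potential function `bar F`. -/
def barF {n m : ℕ} (f P1 P2 : Euc n → ℝ) (g : Fin m → Euc n → ℝ)
    (g' : Fin m → Euc n → Euc n)
    (p : PS n m) : EReal :=
  if ∀ i, barG g g' p.ofLp.1 p.ofLp.2.ofLp.1 p.ofLp.2.ofLp.2 i ≤ 0 then
    ((f p.ofLp.1 + P1 p.ofLp.1 - P2 p.ofLp.1 : ℝ) : EReal) else ⊤

/-- Stationary points of problem (P). -/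
def IsStationaryPt {n m : ℕ} (f P1 P2 : Euc n → ℝ) (f' : Euc n → Euc n)
    (g : Fin m → Euc n → ℝ) (g' : Fin m → Euc n → Euc n) (x : Euc n) : Prop :=
  (∀ i, g i x ≤ 0) ∧ ∃ lam : Fin m → ℝ, (∀ i, 0 ≤ lam i) ∧
    (∀ i, lam i * g i x = 0) ∧
    ∃ u ∈ ConvexSubdiff P1 x, ∃ v ∈ ConvexSubdiff P2 x,
      f' x + u - v + ∑ i, lam i • g' i x = 0

/-- Assumptions A (smoothness, Lipschitz gradients, level-boundedness) and B (MFCQ). -/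
def AssumptionAB {n m : ℕ} (f P1 P2 : Euc n → ℝ) (f' : Euc n → Euc n)
    (g : Fin m → Euc n → ℝ) (g' : Fin m → Euc n → Euc n)
    (Lf : ℝ) (Lg : Fin m → ℝ) : Prop :=
  (∀ x, HasGradientAt f (f' x) x) ∧ LipschitzWith Lf.toNNReal f' ∧
  ConvexOn ℝ univ P1 ∧ Continuous P1 ∧ ConvexOn ℝ univ P2 ∧ Continuous P2 ∧
  (∀ i x, HasGradientAt (g i) (g' i x) x) ∧
  (∀ i, LipschitzWith (Lg i).toNNReal (g' i)) ∧
  {x : Euc n | ∀ i, g i x ≤ 0}.Nonempty ∧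
  (∀ σ : ℝ, IsBounded {x | Fobj f P1 P2 g x ≤ (σ : EReal)}) ∧
  (∀ x : Euc n, (∀ i, g i x ≤ 0) → ∃ d, ∀ i, g i x = 0 → ⟪g' i x, d⟫ < 0)

/-- The sequences generated by the SCP_ls algorithm. -/
structure SCPlsSeq {n m : ℕ} (f P1 P2 : Euc n → ℝ) (f' : Euc n → Euc n)
    (g : Fin m → Euc n → ℝ) (g' : Fin m → Euc n → Euc n)
    (c Llo : ℝ) (x ξ : ℕ → Euc n) (Lfs : ℕ → ℝ)
    (Lgs : ℕ → EuclideanSpace ℝ (Fin m)) : Prop where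
  feas0 : ∀ i, g i (x 0) ≤ 0
  subgrad : ∀ t, ξ t ∈ ConvexSubdiff P2 (x t)
  Lf_lb : ∀ t, Llo ≤ Lfs t
  Lg_lb : ∀ t i, Llo ≤ Lgs t i
  bdd : ∃ M : ℝ, ∀ t, Lfs t ≤ M ∧ ∀ i, Lgs t i ≤ M
  feas_sub : ∀ t i, barG g g' (x (t + 1)) (x t) (Lgs t) i ≤ 0
  min : ∀ t z, (∀ i, barG g g' z (x t) (Lgs t) i ≤ 0) →
    ⟪f' (x t) - ξ t, x (t + 1) - x t⟫ + Lfs t / 2 * ‖x (t + 1) - x t‖ ^ 2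
        + P1 (x (t + 1))
      ≤ ⟪f' (x t) - ξ t, z - x t⟫ + Lfs t / 2 * ‖z - x t‖ ^ 2 + P1 z
  uniq : ∀ t z, (∀ i, barG g g' z (x t) (Lgs t) i ≤ 0) →
    ⟪f' (x t) - ξ t, z - x t⟫ + Lfs t / 2 * ‖z - x t‖ ^ 2 + P1 z
      ≤ ⟪f' (x t) - ξ t, x (t + 1) - x t⟫ + Lfs t / 2 * ‖x (t + 1) - x t‖ ^ 2
        + P1 (x (t + 1)) → z = x (t + 1)
  feas : ∀ t i, g i (x (t + 1)) ≤ 0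
  descent : ∀ t, f (x (t + 1)) + P1 (x (t + 1)) - P2 (x (t + 1)) ≤
    f (x t) + P1 (x t) - P2 (x t) - c / 2 * ‖x (t + 1) - x t‖ ^ 2

/-- Cluster points of a sequence (limits of subsequences). -/
def seqClusterPts {X : Type*} [TopologicalSpace X] (u : ℕ → X) : Set X :=
  {p | ∃ φ : ℕ → ℕ, StrictMono φ ∧ Tendsto (u ∘ φ) atTop (𝓝 p)}

/-- basic properties of the sequence generated by SCP_ls: boundedness,
monotone decrease and convergence of the potential values, and square-summability of
the successive differences. -/
theorem stmt4 {n m : ℕ} (f P1 P2 : Euc n → ℝ) (f' : Euc n → Euc n)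
    (g : Fin m → Euc n → ℝ) (g' : Fin m → Euc n → Euc n)
    (Lf : ℝ) (Lg : Fin m → ℝ)
    (hAB : AssumptionAB f P1 P2 f' g g' Lf Lg)
    (c Llo : ℝ) (hc : 0 < c) (hLlo : 0 < Llo)
    (x ξ : ℕ → Euc n) (Lfs : ℕ → ℝ) (Lgs : ℕ → EuclideanSpace ℝ (Fin m))
    (hseq : SCPlsSeq f P1 P2 f' g g' c Llo x ξ Lfs Lgs) :
    IsBounded (Set.range x) ∧
    (∃ Fstar : ℝ,
      Antitone (fun t => barF f P1 P2 g g' (WithLp.toLp 2 (x (t + 1), WithLp.toLp 2 (x t, Lgs t)))) ∧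
      Tendsto (fun t => barF f P1 P2 g g' (WithLp.toLp 2 (x (t + 1), WithLp.toLp 2 (x t, Lgs t)))) atTop
        (𝓝 ((Fstar : ℝ) : EReal)) ∧
      ∀ t : ℕ, 1 ≤ t →
        barF f P1 P2 g g' (WithLp.toLp 2 (x (t + 1), WithLp.toLp 2 (x t, Lgs t)))
            + ((c / 2 * ‖x (t + 1) - x t‖ ^ 2 : ℝ) : EReal)
          ≤ barF f P1 P2 g g' (WithLp.toLp 2 (x t, WithLp.toLp 2 (x (t - 1), Lgs (t - 1))))) ∧
    (Summable fun t => ‖x (t + 1) - x t‖ ^ 2) ∧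
    Tendsto (fun t => ‖x (t + 1) - x t‖) atTop (𝓝 0) := by
  obtain ⟨hfgrad, -, -, hP1cont, -, hP2cont, -, -, -, hlevel, -⟩ := hAB
  obtain ⟨Freal, hFreal⟩ : ∃ F : Euc n → ℝ, ∀ z, F z = f z + P1 z - P2 z :=
    ⟨_, fun z => rfl⟩
  have hFcont : Continuous Freal := by
    have hfc : Continuous f := continuous_iff_continuousAt.2 fun z =>
      (hfgrad z).hasFDerivAt.differentiableAt.continuousAt
    have : Freal = fun z => f z + P1 z - P2 z := funext hFreal
    rw [this]
    exact (hfc.add hP1cont).sub hP2cont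
  have hfeasall : ∀ t i, g i (x t) ≤ 0 := by
    intro t
    cases t with
    | zero => exact hseq.feas0
    | succ s => exact hseq.feas s
  have hdec : ∀ t, Freal (x (t + 1)) + c / 2 * ‖x (t + 1) - x t‖ ^ 2 ≤ Freal (x t) := by
    intro t; have := hseq.descent t; rw [hFreal, hFreal]; linarith
  have hmono : ∀ t, Freal (x (t + 1)) ≤ Freal (x t) := by
    intro t
    have h1 := hdec t
    nlinarith [mul_nonneg (by linarith : (0:ℝ) ≤ c / 2) (sq_nonneg ‖x (t + 1) - x t‖)]
  have hanti : Antitone (fun t => Freal (x t)) := antitone_nat_of_succ_le hmono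
  have hle0 : ∀ t, Freal (x t) ≤ Freal (x 0) := fun t => hanti (Nat.zero_le t)
  -- membership in the level set
  have hmem : ∀ t, x t ∈ {z | Fobj f P1 P2 g z ≤ ((Freal (x 0) : ℝ) : EReal)} := by
    intro t
    have : Fobj f P1 P2 g (x t) = ((Freal (x t) : ℝ) : EReal) := by
      unfold Fobj; rw [if_pos (hfeasall t), hFreal]
    simp only [Set.mem_setOf_eq, this]
    exact EReal.coe_le_coe_iff.mpr (hle0 t)
  have hbdd : IsBounded (Set.range x) := by
    refine (hlevel (Freal (x 0))).subset ?_
    rintro - ⟨t, rfl⟩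
    exact hmem t
  -- lower bound
  obtain ⟨R, hR⟩ := hbdd.subset_closedBall 0
  obtain ⟨z0, -, hz0⟩ := (isCompact_closedBall (0 : Euc n) R).exists_isMinOn
    ⟨x 0, hR ⟨0, rfl⟩⟩ hFcont.continuousOn
  have hlb : ∀ t, Freal z0 ≤ Freal (x t) := fun t => hz0 (hR ⟨t, rfl⟩)
  obtain ⟨B, hB⟩ : ∃ B : ℝ, B = Freal z0 := ⟨_, rfl⟩
  have hlb : ∀ t, B ≤ Freal (x t) := by rw [hB]; exact hlb
  -- the value sequence
  obtain ⟨a, ha⟩ : ∃ a : ℕ → ℝ, ∀ t, a t = Freal (x (t + 1)) := ⟨_, fun t => rfl⟩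
  have hantia : Antitone a := fun s t hst => by
    rw [ha, ha]; exact hanti (Nat.succ_le_succ hst)
  have hbddbelow : BddBelow (Set.range a) := ⟨B, by rintro - ⟨t, rfl⟩; rw [ha]; exact hlb (t + 1)⟩
  have htendsa : Tendsto a atTop (𝓝 (⨅ t, a t)) := tendsto_atTop_ciInf hantia hbddbelow
  -- barF values
  have hbarF : ∀ t, barF f P1 P2 g g' (WithLp.toLp 2 (x (t + 1), WithLp.toLp 2 (x t, Lgs t))) = ((a t : ℝ) : EReal) := by
    intro t
    unfold barF
    simp only [WithLp.ofLp_toLp]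
    rw [if_pos (hseq.feas_sub t), ha, hFreal]
  refine ⟨hbdd, ⟨⨅ t, a t, ?_, ?_, ?_⟩, ?_, ?_⟩
  · -- Antitone
    refine antitone_nat_of_succ_le fun t => ?_
    rw [hbarF, hbarF]
    exact EReal.coe_le_coe_iff.mpr (by rw [ha, ha]; exact hmono (t + 1))
  · -- Tendsto
    have : Tendsto (fun t => ((a t : ℝ) : EReal)) atTop (𝓝 ((⨅ t, a t : ℝ) : EReal)) :=
      EReal.tendsto_coe.mpr htendsa
    exact this.congr fun t => (hbarF t).symm
  · -- descent inequality
    intro t ht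
    match t, ht with
    | (s + 1), _ => ?_
    simp only [Nat.succ_sub_one]
    rw [hbarF, hbarF, ← EReal.coe_add]
    refine EReal.coe_le_coe_iff.mpr ?_
    have := hdec (s + 1)
    rw [ha, ha]
    linarith
  · -- Summable
    have htel : ∀ N, Freal (x N) + c / 2 * ∑ i ∈ Finset.range N, ‖x (i + 1) - x i‖ ^ 2
        ≤ Freal (x 0) := by
      intro N
      induction N with
      | zero => simp
      | succ k ih =>
        rw [Finset.sum_range_succ]
        have := hdec k
        linarith
    refine summable_of_sum_range_le (fun t => sq_nonneg _)
      (c := (Freal (x 0) - B) / (c / 2)) fun N => ?_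
    have hc2 : (0 : ℝ) < c / 2 := by linarith
    rw [le_div_iff₀' hc2]
    have := htel N
    have := hlb N
    linarith
  · -- norm tends to zero
    have hsum : Summable fun t => ‖x (t + 1) - x t‖ ^ 2 := by
      have htel : ∀ N, Freal (x N) + c / 2 * ∑ i ∈ Finset.range N, ‖x (i + 1) - x i‖ ^ 2
          ≤ Freal (x 0) := by
        intro N
        induction N with
        | zero => simp
        | succ k ih =>
          rw [Finset.sum_range_succ]
          have := hdec k
          linarith
      refine summable_of_sum_range_le (fun t => sq_nonneg _)
        (c := (Freal (x 0) - B) / (c / 2)) fun N => ?_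
      have hc2 : (0 : ℝ) < c / 2 := by linarith
      rw [le_div_iff₀' hc2]
      have := htel N
      have := hlb N
      linarith
    have hsq : Tendsto (fun t => ‖x (t + 1) - x t‖ ^ 2) atTop (𝓝 0) :=
      hsum.tendsto_atTop_zero
    have := (Real.continuous_sqrt.tendsto 0).comp hsq
    simp only [Real.sqrt_zero] at this
    refine this.congr fun t => ?_
    simp [Real.sqrt_sq (norm_nonneg _)]
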